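/- Let k, l be positive integers and define g : ℝ² → ℝ by g(x,y) = x^{2k} y^{2k} / (x^{2kl} + y^{2kl})^{1/l} for (x,y) ≠ (0,0) and g(0,0) = 0. Then g is of class C^k on ℝ². -/

import Mathlib

open Asymptotics Filter Topology

private lemma hom_f0 {E F : Type} [NormedAddCommGroup E] [NormedSpace ℝ E]
    [NormedAddCommGroup F] [NormedSpace ℝ F]
    {f : E → F} {d : ℕ} (hd : 0 < d)
    (hhom : ∀ c : ℝ, 0 < c → ∀ x, f (c • x) = c ^ d • f x) : f 0 = 0 := by
  have h := hhom 2 (by norm_num) 0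
  rw [smul_zero] at h
  have h2 := congrArg norm h
  rw [norm_smul, Real.norm_eq_abs, abs_of_pos (by positivity : (0:ℝ) < 2 ^ d)] at h2
  have hp : (2:ℝ) ≤ 2 ^ d := by
    calc (2:ℝ) = 2 ^ 1 := (pow_one 2).symm
      _ ≤ 2 ^ d := pow_le_pow_right₀ one_le_two hd
  have hn : ‖f 0‖ = 0 := by nlinarith [norm_nonneg (f 0)]
  exact norm_eq_zero.1 hn

private lemma hom_bound {E F : Type} [NormedAddCommGroup E] [NormedSpace ℝ E] [ProperSpace E]
    [NormedAddCommGroup F] [NormedSpace ℝ F]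
    (f : E → F) (d : ℕ) (hd : 0 < d)
    (hhom : ∀ c : ℝ, 0 < c → ∀ x, f (c • x) = c ^ d • f x)
    (hf : ContinuousOn f {(0:E)}ᶜ) :
    ∃ C, 0 ≤ C ∧ ∀ x, ‖f x‖ ≤ C * ‖x‖ ^ d := by
  have hsub : Metric.sphere (0:E) 1 ⊆ {(0:E)}ᶜ := by
    intro x hx
    simp only [Set.mem_compl_iff, Set.mem_singleton_iff]
    intro h0
    rw [h0] at hx
    simp at hx
  obtain ⟨C, hC⟩ := (isCompact_sphere (0:E) 1).exists_bound_of_continuousOn (hf.mono hsub)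
  refine ⟨max C 0, le_max_right _ _, fun x => ?_⟩
  rcases eq_or_ne x 0 with rfl | hx
  · rw [hom_f0 hd hhom]
    simp [zero_pow hd.ne']
  · have hxn : (0:ℝ) < ‖x‖ := norm_pos_iff.2 hx
    have hmem : ‖x‖⁻¹ • x ∈ Metric.sphere (0:E) 1 := by
      simp [norm_smul, abs_of_pos (inv_pos.2 hxn), inv_mul_cancel₀ hxn.ne']
    have hx' : f x = ‖x‖ ^ d • f (‖x‖⁻¹ • x) := by
      have := hhom ‖x‖ hxn (‖x‖⁻¹ • x)
      rwa [smul_smul, mul_inv_cancel₀ hxn.ne', one_smul] at this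
    rw [hx', norm_smul, Real.norm_eq_abs, abs_of_pos (by positivity)]
    calc ‖x‖ ^ d * ‖f (‖x‖⁻¹ • x)‖ ≤ ‖x‖ ^ d * max C 0 := by
          gcongr
          exact (hC _ hmem).trans (le_max_left _ _)
      _ = max C 0 * ‖x‖ ^ d := mul_comm _ _

private lemma hom_contDiff {E : Type} [NormedAddCommGroup E] [NormedSpace ℝ E] [ProperSpace E] :
    ∀ (n : ℕ) {F : Type} [NormedAddCommGroup F] [NormedSpace ℝ F] [CompleteSpace F]
      (f : E → F) (d : ℕ),
      (∀ c : ℝ, 0 < c → ∀ x, f (c • x) = c ^ d • f x) →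
      ContDiffOn ℝ ((⊤ : ℕ∞) : WithTop ℕ∞) f {(0:E)}ᶜ → n < d →
      ContDiff ℝ (n : WithTop ℕ∞) f := by
  intro n
  induction n with
  | zero =>
    intro F _ _ _ f d hhom hsm hnd
    rw [Nat.cast_zero, contDiff_zero]
    obtain ⟨C, hC0, hC⟩ := hom_bound f d hnd hhom hsm.continuousOn
    rw [continuous_iff_continuousAt]
    intro x
    rcases eq_or_ne x 0 with rfl | hx
    · rw [ContinuousAt, hom_f0 hnd hhom]
      apply squeeze_zero_norm hC
      have hcont : Continuous (fun x : E => C * ‖x‖ ^ d) := by continuity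
      have h0 : C * ‖(0:E)‖ ^ d = 0 := by simp [zero_pow hnd.ne']
      have ht : Filter.Tendsto (fun x : E => C * ‖x‖ ^ d) (𝓝 0) (𝓝 (C * ‖(0:E)‖ ^ d)) :=
        hcont.continuousAt
      rwa [h0] at ht
    · exact hsm.continuousOn.continuousAt (isOpen_compl_singleton.mem_nhds hx)
  | succ n ih =>
    intro F _ _ _ f d hhom hsm hnd
    have hd1 : 0 < d := by omega
    obtain ⟨C, hC0, hC⟩ := hom_bound f d hd1 hhom hsm.continuousOn
    have hf0 := hom_f0 hd1 hhom
    have hder0 : HasFDerivAt f (0 : E →L[ℝ] F) 0 := by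
      rw [hasFDerivAt_iff_isLittleO_nhds_zero]
      simp only [zero_add, hf0, sub_zero, ContinuousLinearMap.zero_apply]
      rw [isLittleO_iff]
      intro ε hε
      have hball : ∀ᶠ y in 𝓝 (0:E), ‖y‖ < min 1 (ε / (C + 1)) := by
        have hmem : Metric.ball (0:E) (min 1 (ε / (C+1))) ∈ 𝓝 (0:E) :=
          Metric.ball_mem_nhds _ (lt_min one_pos (by positivity))
        filter_upwards [hmem] with y hy
        simpa [dist_zero_right] using hy
      filter_upwards [hball] with y hy
      have hy1 : ‖y‖ ≤ 1 := le_of_lt (lt_of_lt_of_le hy (min_le_left _ _))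
      have hy2 : ‖y‖ ≤ ε / (C + 1) := le_of_lt (lt_of_lt_of_le hy (min_le_right _ _))
      calc ‖f y‖ ≤ C * ‖y‖ ^ d := hC y
        _ ≤ C * ‖y‖ ^ 2 :=
            mul_le_mul_of_nonneg_left
              (pow_le_pow_of_le_one (norm_nonneg _) hy1 (show 2 ≤ d by omega)) hC0
        _ = (C * ‖y‖) * ‖y‖ := by ring
        _ ≤ ε * ‖y‖ := by
            gcongr
            calc C * ‖y‖ ≤ (C + 1) * (ε / (C + 1)) := by
                  apply mul_le_mul (by linarith) hy2 (norm_nonneg _) (by linarith)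
              _ = ε := by field_simp
    have hdiff : Differentiable ℝ f := by
      intro x
      rcases eq_or_ne x 0 with rfl | hx
      · exact hder0.differentiableAt
      · exact (hsm.contDiffAt (isOpen_compl_singleton.mem_nhds hx)).differentiableAt
          (by simp)
    have hhom' : ∀ c : ℝ, 0 < c → ∀ x,
        fderiv ℝ f (c • x) = c ^ (d - 1) • fderiv ℝ f x := by
      intro c hc x
      have h1 : HasFDerivAt (fun z : E => c⁻¹ • z)
          ((c⁻¹ : ℝ) • ContinuousLinearMap.id ℝ E) (c • x) :=
        (hasFDerivAt_id _).const_smul c⁻¹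
      have h2 : HasFDerivAt f (fderiv ℝ f x) (c⁻¹ • c • x) := by
        rw [smul_smul, inv_mul_cancel₀ hc.ne', one_smul]
        exact (hdiff x).hasFDerivAt
      have h3 := h2.comp (c • x) h1
      have h5 := h3.const_smul (c ^ d)
      have h4 : (fun z : E => c ^ d • (f ∘ fun z : E => c⁻¹ • z) z) = f := by
        funext z
        simp only [Function.comp]
        rw [← hhom c hc (c⁻¹ • z), smul_smul, mul_inv_cancel₀ hc.ne', one_smul]
      rw [show (c ^ d • f ∘ HSMul.hSMul c⁻¹ : E → F) = f from h4] at h5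
      rw [h5.fderiv]
      ext v
      simp only [ContinuousLinearMap.smul_apply, ContinuousLinearMap.coe_comp',
        Function.comp_apply, ContinuousLinearMap.coe_smul',
        ContinuousLinearMap.coe_id', Pi.smul_apply, id_eq, map_smul, smul_smul]
      congr 1
      have hdd : c ^ d = c ^ (d - 1) * c := by
        rw [← pow_succ]
        congr 1
        omega
      rw [hdd, mul_assoc, mul_inv_cancel₀ hc.ne', mul_one]
    have hsm' : ContDiffOn ℝ ((⊤ : ℕ∞) : WithTop ℕ∞) (fderiv ℝ f) {(0:E)}ᶜ :=
      hsm.fderiv_of_isOpen isOpen_compl_singleton (le_of_eq rfl)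
    have hih := ih (fderiv ℝ f) (d - 1) hhom' hsm' (by omega)
    rw [show ((n + 1 : ℕ) : WithTop ℕ∞) = (n : WithTop ℕ∞) + 1 by push_cast; rfl]
    rw [contDiff_succ_iff_fderiv]
    refine ⟨hdiff, fun h => absurd h (by simp), hih⟩

theorem stmt_3 (k l : ℕ) (hk : 0 < k) (hl : 0 < l) :
    ContDiff ℝ k (fun q : ℝ × ℝ =>
      q.1 ^ (2 * k) * q.2 ^ (2 * k) /
        (q.1 ^ (2 * k * l) + q.2 ^ (2 * k * l)) ^ ((1 : ℝ) / l)) := by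
  have hl0 : (l : ℝ) ≠ 0 := Nat.cast_ne_zero.2 hl.ne'
  have hev : Even (2 * k * l) := ⟨k * l, by ring⟩
  set f : ℝ × ℝ → ℝ := fun q =>
    q.1 ^ (2 * k) * q.2 ^ (2 * k) /
      (q.1 ^ (2 * k * l) + q.2 ^ (2 * k * l)) ^ ((1 : ℝ) / l) with hf
  have hhom : ∀ c : ℝ, 0 < c → ∀ q : ℝ × ℝ, f (c • q) = c ^ (2 * k) • f q := by
    intro c hc q
    obtain ⟨x, y⟩ := q
    simp only [hf, Prod.smul_mk, smul_eq_mul, Prod.fst, Prod.snd]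
    have hden : ((c * x) ^ (2 * k * l) + (c * y) ^ (2 * k * l)) ^ ((1:ℝ)/l)
        = c ^ (2 * k) * (x ^ (2 * k * l) + y ^ (2 * k * l)) ^ ((1:ℝ)/l) := by
      rw [mul_pow, mul_pow, ← mul_add]
      rw [Real.mul_rpow (by positivity)
        (add_nonneg (hev.pow_nonneg x) (hev.pow_nonneg y))]
      congr 1
      rw [← Real.rpow_natCast c (2 * k * l), ← Real.rpow_mul hc.le,
        ← Real.rpow_natCast c (2 * k)]
      congr 1
      rw [mul_one_div]
      push_cast
      rw [mul_div_assoc, div_self hl0, mul_one]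
    rw [hden, mul_pow, mul_pow]
    rw [show c ^ (2*k) * x ^ (2*k) * (c ^ (2*k) * y ^ (2*k))
        = c ^ (2*k) * (c ^ (2*k) * (x ^ (2*k) * y ^ (2*k))) by ring]
    rw [mul_div_mul_left _ _ (by positivity : (c:ℝ) ^ (2*k) ≠ 0), mul_div_assoc]
  have hsm : ContDiffOn ℝ ((⊤ : ℕ∞) : WithTop ℕ∞) f {(0 : ℝ × ℝ)}ᶜ := by
    intro q hq
    apply ContDiffAt.contDiffWithinAt
    have hq' : q.1 ≠ 0 ∨ q.2 ≠ 0 := by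
      by_contra h
      push_neg at h
      exact hq (Prod.ext h.1 h.2)
    have hBpos : 0 < q.1 ^ (2 * k * l) + q.2 ^ (2 * k * l) := by
      rcases hq' with h | h
      · exact add_pos_of_pos_of_nonneg (hev.pow_pos h) (hev.pow_nonneg _)
      · exact add_pos_of_nonneg_of_pos (hev.pow_nonneg _) (hev.pow_pos h)
    apply ContDiffAt.div
    · exact ((contDiff_fst.pow _).mul (contDiff_snd.pow _)).contDiffAt
    · exact (((contDiff_fst.pow _).add (contDiff_snd.pow _)).contDiffAt).rpow_const_of_ne
        hBpos.ne'
    · exact (Real.rpow_pos_of_pos hBpos _).ne'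
  exact hom_contDiff k f (2 * k) hhom hsm (by omega)
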